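/- Fix real numbers n and w, let k ∈ ℕ, and set x := n/2 + w − k. Let V be an ℝ-module and let P, F : V → V be ℝ-linear maps. For each j ∈ ℕ define the operator Q_{j,v} := p_{j,v}(P), the evaluation at P of the polynomial p_{j,v}(X) := ∏_{i=0}^{j−1}(X − (v−2i)(n+v−2i)) ∈ ℝ[X]. Then Σ_{j=0}^{k} C(k,j)·(x)_j·(x)_{k−j}·(Q_{k−j, w−2} ∘ F ∘ Q_{j,w}) = Σ_{i=0}^{k} Σ_{j=0}^{k−i} 4^{k−i−j}·(k!/(i!·j!))·(x)_{k−i}·(x)_{k−j}·(Q_{i,w} ∘ F ∘ Q_{j,w}) as ℝ-linear maps V → V, where C(k,j) is the binomial coefficient and (x)_m := x(x+1)⋯(x+m−1) is the ascending Pochhammer symbol. -/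

import Mathlib

/-- The polynomial `p_{j,w}(X) = ∏_{i=0}^{j-1} (X - (w-2i)(n+w-2i))` encoding the
operator `P_{2j,w} = ∏_{i=0}^{j-1} (Δ_{g₊} - (w-2i)(n+w-2i))` on the Poincaré space. -/
noncomputable def poincarePoly (n : ℝ) (j : ℕ) (w : ℝ) : Polynomial ℝ :=
  ∏ i ∈ Finset.range j,
    (Polynomial.X - Polynomial.C ((w - 2 * (i : ℝ)) * (n + w - 2 * (i : ℝ))))

open Polynomial Finset

lemma pp_succ (n : ℝ) (j : ℕ) (v : ℝ) :
    poincarePoly n (j+1) v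
      = poincarePoly n j v * (X - C ((v - 2*(j:ℝ)) * (n + v - 2*(j:ℝ)))) := by
  simp [poincarePoly, Finset.prod_range_succ]

lemma asc_eval_succ_left (d : ℕ) (z : ℝ) :
    (ascPochhammer ℝ (d+1)).eval z = z * (ascPochhammer ℝ d).eval (z+1) := by
  rw [ascPochhammer_succ_left]; simp [eval_comp]

lemma asc_eval_add (a b : ℕ) (z : ℝ) :
    (ascPochhammer ℝ (a+b)).eval z
      = (ascPochhammer ℝ a).eval z * (ascPochhammer ℝ b).eval (z + a) := by
  rw [← ascPochhammer_mul]; simp [eval_comp]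

noncomputable def cco (n w : ℝ) (m i : ℕ) : ℝ :=
  4^(m-i) * ((m.factorial : ℝ) / (i.factorial : ℝ))
    * (ascPochhammer ℝ (m-i)).eval (n/2 + w - m)

lemma coeffA (n w : ℝ) (i d : ℕ) :
    cco n w (i+d+2) (i+1)
      = cco n w (i+d+1) i
        + cco n w (i+d+1) (i+1) *
          ((w - 2*((i:ℝ)+1)) * (n + w - 2*((i:ℝ)+1))
            - (w - 2 - 2*(((i:ℝ)+d+1))) * (n + w - 2 - 2*((i:ℝ)+(d:ℝ)+1))) := by
  have e1 : i + d + 2 - (i+1) = d + 1 := by omega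
  have e2 : i + d + 1 - i = d + 1 := by omega
  have e3 : i + d + 1 - (i+1) = d := by omega
  simp only [cco, e1, e2, e3]
  have hz : (n/2 + w - ((i+d+1 : ℕ):ℝ)) = (n/2 + w - ((i+d+2 : ℕ):ℝ)) + 1 := by
    push_cast; ring
  set z : ℝ := n/2 + w - ((i+d+2 : ℕ):ℝ) with hzdef
  rw [hz, asc_eval_succ_left, ascPochhammer_succ_eval]
  set A : ℝ := (ascPochhammer ℝ d).eval (z+1)
  have hzz : z = n/2 + w - (i:ℝ) - (d:ℝ) - 2 := by rw [hzdef]; push_cast; ring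
  have f1 : ((i+d+2 : ℕ).factorial : ℝ) = ((i+d+2 : ℕ):ℝ) * ((i+d+1 : ℕ).factorial : ℝ) := by
    rw [show i+d+2 = (i+d+1)+1 from rfl, Nat.factorial_succ]; push_cast; ring
  have f2 : ((i+1 : ℕ).factorial : ℝ) = ((i:ℝ)+1) * ((i : ℕ).factorial : ℝ) := by
    rw [Nat.factorial_succ]; push_cast; ring
  rw [f1, f2, hzz]
  have hi : ((i:ℕ).factorial : ℝ) ≠ 0 := Nat.cast_ne_zero.2 (Nat.factorial_ne_zero i)
  field_simp
  push_cast
  ring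

lemma coeffC (n w : ℝ) (m : ℕ) :
    cco n w (m+1) 0
      = cco n w m 0 *
          ((w - 2*((0:ℕ):ℝ)) * (n + w - 2*((0:ℕ):ℝ))
            - (w - 2 - 2*((m:ℝ))) * (n + w - 2 - 2*((m:ℝ)))) := by
  simp only [cco, Nat.sub_zero, Nat.factorial_zero]
  have hz : (n/2 + w - ((m : ℕ):ℝ)) = (n/2 + w - ((m+1 : ℕ):ℝ)) + 1 := by push_cast; ring
  set z : ℝ := n/2 + w - ((m+1 : ℕ):ℝ) with hzdef
  rw [hz, asc_eval_succ_left]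
  have hzz : z = n/2 + w - (m:ℝ) - 1 := by rw [hzdef]; push_cast; ring
  have f1 : ((m+1 : ℕ).factorial : ℝ) = ((m:ℝ)+1) * ((m : ℕ).factorial : ℝ) := by
    rw [Nat.factorial_succ]; push_cast; ring
  rw [f1, hzz]
  push_cast
  ring

lemma key (n w : ℝ) : ∀ m : ℕ,
    poincarePoly n m (w-2)
      = ∑ i ∈ Finset.range (m+1), C (cco n w m i) * poincarePoly n i w := by
  intro m
  induction m with
  | zero => simp [poincarePoly, cco]
  | succ m ih =>
    have expand : ∀ i : ℕ,
        poincarePoly n i w * (X - C ((w - 2 - 2*(m:ℝ)) * (n + w - 2 - 2*(m:ℝ))))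
          = poincarePoly n (i+1) w
            + C ((w - 2*(i:ℝ)) * (n + w - 2*(i:ℝ))
                - (w - 2 - 2*(m:ℝ)) * (n + w - 2 - 2*(m:ℝ))) * poincarePoly n i w := by
      intro i
      rw [pp_succ, map_sub]
      ring
    have hstep : poincarePoly n (m+1) (w-2)
        = (∑ i ∈ Finset.range (m+1), C (cco n w m i) * poincarePoly n (i+1) w)
          + ∑ i ∈ Finset.range (m+1),
              C (cco n w m i * ((w - 2*(i:ℝ)) * (n + w - 2*(i:ℝ))
                - (w - 2 - 2*(m:ℝ)) * (n + w - 2 - 2*(m:ℝ)))) * poincarePoly n i w := by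
      have h0 : poincarePoly n (m+1) (w-2)
          = poincarePoly n m (w-2) * (X - C ((w - 2 - 2*(m:ℝ)) * (n + w - 2 - 2*(m:ℝ)))) := by
        rw [pp_succ, show ((w-2) - 2*(m:ℝ)) * (n + (w-2) - 2*(m:ℝ))
          = (w - 2 - 2*(m:ℝ)) * (n + w - 2 - 2*(m:ℝ)) from by ring]
      rw [h0, ih, Finset.sum_mul, ← Finset.sum_add_distrib]
      refine Finset.sum_congr rfl fun i _ => ?_
      rw [mul_assoc, expand i, map_mul]
      ring
    rw [hstep]
    rw [Finset.sum_range_succ' (fun i => C (cco n w (m+1) i) * poincarePoly n i w) (m+1)]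
    rw [Finset.sum_range_succ' (fun i => C (cco n w m i * ((w - 2*(i:ℝ)) * (n + w - 2*(i:ℝ))
                - (w - 2 - 2*(m:ℝ)) * (n + w - 2 - 2*(m:ℝ)))) * poincarePoly n i w) m]
    rw [Finset.sum_range_succ (fun i => C (cco n w (m+1) (i+1)) * poincarePoly n (i+1) w) m]
    rw [Finset.sum_range_succ (fun i => C (cco n w m i) * poincarePoly n (i+1) w) m]
    have hB : cco n w (m+1) (m+1) = cco n w m m := by
      simp only [cco, Nat.sub_self]
      rw [div_self (by exact_mod_cast Nat.factorial_ne_zero (m+1)),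
        div_self (by exact_mod_cast Nat.factorial_ne_zero m)]
      simp [ascPochhammer_zero]
    have hC : cco n w (m+1) 0 = cco n w m 0 *
          ((w - 2*((0:ℕ):ℝ)) * (n + w - 2*((0:ℕ):ℝ))
            - (w - 2 - 2*((m:ℝ))) * (n + w - 2 - 2*((m:ℝ)))) := coeffC n w m
    have hA : ∀ i ∈ Finset.range m,
        C (cco n w (m+1) (i+1)) * poincarePoly n (i+1) w
          = C (cco n w m i) * poincarePoly n (i+1) w
            + C (cco n w m (i+1) * ((w - 2*((i+1:ℕ):ℝ)) * (n + w - 2*((i+1:ℕ):ℝ))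
                - (w - 2 - 2*(m:ℝ)) * (n + w - 2 - 2*(m:ℝ)))) * poincarePoly n (i+1) w := by
      intro i hi
      obtain ⟨d, rfl⟩ : ∃ d, m = i + d + 1 := ⟨m - i - 1, by
        have := Finset.mem_range.1 hi; omega⟩
      rw [← add_mul, ← map_add]
      congr 2
      rw [show i + d + 1 + 1 = i + d + 2 from rfl, coeffA n w i d]
      push_cast
      ring
    rw [Finset.sum_congr rfl hA, hB, hC]
    simp only [Finset.sum_add_distrib]
    push_cast
    ring

/-- The algebraic content of Lemma 3.1:
`Σ_j C(k,j)(x)_j(x)_{k-j} P_{2k-2j,w-2}∘F∘P_{2j,w}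
  = Σ_{i,j} 4^{k-i-j}(k!/(i!j!))(x)_{k-i}(x)_{k-j} P_{2i,w}∘F∘P_{2j,w}`,
with `x = n/2 + w - k` and Gamma ratios written as ascending Pochhammer symbols. -/
theorem expand_Df {V : Type*} [AddCommGroup V] [Module ℝ V]
    (n w : ℝ) (k : ℕ) (x : ℝ) (hx : x = n / 2 + w - (k : ℝ))
    (P F : Module.End ℝ V)
    (Q : ℕ → ℝ → Module.End ℝ V)
    (hQ : ∀ j v, Q j v = Polynomial.aeval P (poincarePoly n j v)) :
    ∑ j ∈ Finset.range (k + 1),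
        ((Nat.choose k j : ℝ) * (ascPochhammer ℝ j).eval x
            * (ascPochhammer ℝ (k - j)).eval x)
          • (Q (k - j) (w - 2) * F * Q j w)
      = ∑ i ∈ Finset.range (k + 1), ∑ j ∈ Finset.range (k + 1 - i),
          ((4 : ℝ) ^ (k - i - j) * ((k.factorial : ℝ) / ((i.factorial : ℝ) * (j.factorial : ℝ)))
              * (ascPochhammer ℝ (k - i)).eval x * (ascPochhammer ℝ (k - j)).eval x)
            • (Q i w * F * Q j w) := by
  have hexp : ∀ m : ℕ, Q m (w-2)
      = ∑ i ∈ Finset.range (m+1), cco n w m i • Q i w := by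
    intro m
    rw [hQ, key, map_sum]
    refine Finset.sum_congr rfl fun i _ => ?_
    rw [map_mul, Polynomial.aeval_C, ← Algebra.smul_def, hQ]
  calc ∑ j ∈ Finset.range (k + 1),
        ((Nat.choose k j : ℝ) * (ascPochhammer ℝ j).eval x
            * (ascPochhammer ℝ (k - j)).eval x)
          • (Q (k - j) (w - 2) * F * Q j w)
      = ∑ j ∈ Finset.range (k + 1), ∑ i ∈ Finset.range (k - j + 1),
          (((Nat.choose k j : ℝ) * (ascPochhammer ℝ j).eval x
            * (ascPochhammer ℝ (k - j)).eval x) * cco n w (k-j) i)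
            • (Q i w * F * Q j w) := by
        refine Finset.sum_congr rfl fun j hj => ?_
        rw [hexp (k - j), Finset.sum_mul, Finset.sum_mul, Finset.smul_sum]
        refine Finset.sum_congr rfl fun i hi => ?_
        rw [smul_mul_assoc, smul_mul_assoc, smul_smul]
    _ = ∑ i ∈ Finset.range (k + 1), ∑ j ∈ Finset.range (k + 1 - i),
          (((Nat.choose k j : ℝ) * (ascPochhammer ℝ j).eval x
            * (ascPochhammer ℝ (k - j)).eval x) * cco n w (k-j) i)
            • (Q i w * F * Q j w) := by
        refine Finset.sum_comm' ?_
        intro a b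
        simp only [Finset.mem_range]
        omega
    _ = _ := by
        refine Finset.sum_congr rfl fun i hi => Finset.sum_congr rfl fun j hj => ?_
        have hik : i ≤ k := by have := Finset.mem_range.1 hi; omega
        have hjk : j ≤ k - i := by have := Finset.mem_range.1 hj; omega
        have hijk : i + j ≤ k := by omega
        congr 1
        have e1 : k - j - i = k - i - j := by omega
        have e2 : j + (k - i - j) = k - i := by omega
        have hcast : ((k - j : ℕ) : ℝ) = (k : ℝ) - (j : ℝ) := by
          push_cast [Nat.cast_sub (by omega : j ≤ k)]; ring
        have hpt : n/2 + w - ((k - j : ℕ) : ℝ) = x + (j : ℕ) := by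
          rw [hcast, hx]; ring
        rw [cco, e1, hpt, ← e2, asc_eval_add]
        have hnat := Nat.choose_mul_factorial_mul_factorial (show j ≤ k by omega)
        have hfac' : ((k.choose j : ℕ) : ℝ) * (j.factorial : ℝ) * ((k-j).factorial : ℝ)
            = (k.factorial : ℝ) := by exact_mod_cast congrArg (Nat.cast (R := ℝ)) hnat
        field_simp
        rw [Nat.add_sub_cancel_left]
        linear_combination (Polynomial.eval x (ascPochhammer ℝ j)
          * Polynomial.eval x (ascPochhammer ℝ (k-j))
          * Polynomial.eval (x+(j:ℝ)) (ascPochhammer ℝ (k-i-j))) * hfac'
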